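/- Free theorem for type-based relaxed noninterference: if a term e contains no type variables and is well-typed at τ in the public view, i.e. Δ_P, Γ_P ⊢ e : τ, then e satisfies TRNI(P, τ): e is typable in the confidential view, τ is well-formed in Δ_P, and for all indistinguishable term substitutions (γ1, γ2) ∈ Ind⟦P⟧, the pair (γ1(e), γ2(e)) is in the term indistinguishability relation Ind_term⟦τ⟧. -/

import Mathlib

namespace STLC

/-- Types of the simply typed lambda calculus with type variables:
`τ ::= int | α | τ×τ | τ→τ`. -/
inductive Ty : Type where
  | int : Ty
  | tvar (a : ℕ) : Ty
  | prod (t₁ t₂ : Ty) : Ty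
  | arrow (t₁ t₂ : Ty) : Ty

/-- Terms; `prim f` is a primitive binary arithmetic operator `⊕`. -/
inductive Tm : Type where
  | var (x : ℕ) : Tm
  | lit (n : ℤ) : Tm
  | pair (e₁ e₂ : Tm) : Tm
  | fst (e : Tm) : Tm
  | snd (e : Tm) : Tm
  | lam (x : ℕ) (τ : Ty) (b : Tm) : Tm
  | app (e₁ e₂ : Tm) : Tm
  | prim (f : ℤ → ℤ → ℤ) (e₁ e₂ : Tm) : Tm

/-- `τ` is well-formed w.r.t. the type context `Δ`: all its type variables are in `Δ`. -/
def Ty.wf (Δ : Set ℕ) : Ty → Prop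
  | .int => True
  | .tvar a => a ∈ Δ
  | .prod t₁ t₂ => t₁.wf Δ ∧ t₂.wf Δ
  | .arrow t₁ t₂ => t₁.wf Δ ∧ t₂.wf Δ

/-- A type is closed when it has no type variables. -/
def Ty.closed (τ : Ty) : Prop := τ.wf ∅

/-- Apply a type substitution `δ` to a type. -/
def Ty.subst (δ : ℕ → Ty) : Ty → Ty
  | .int => .int
  | .tvar a => δ a
  | .prod t₁ t₂ => .prod (t₁.subst δ) (t₂.subst δ)
  | .arrow t₁ t₂ => .arrow (t₁.subst δ) (t₂.subst δ)

/-- Apply a type substitution to the type annotations of a term. -/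
def Tm.tsubst (δ : ℕ → Ty) : Tm → Tm
  | .var x => .var x
  | .lit n => .lit n
  | .pair e₁ e₂ => .pair (e₁.tsubst δ) (e₂.tsubst δ)
  | .fst e => .fst (e.tsubst δ)
  | .snd e => .snd (e.tsubst δ)
  | .lam x τ b => .lam x (τ.subst δ) (b.tsubst δ)
  | .app e₁ e₂ => .app (e₁.tsubst δ) (e₂.tsubst δ)
  | .prim f e₁ e₂ => .prim f (e₁.tsubst δ) (e₂.tsubst δ)

/-- Simultaneous substitution of (closed) terms for free term variables. -/
def Tm.msubst (γ : ℕ → Option Tm) : Tm → Tm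
  | .var x => (γ x).getD (.var x)
  | .lit n => .lit n
  | .pair e₁ e₂ => .pair (e₁.msubst γ) (e₂.msubst γ)
  | .fst e => .fst (e.msubst γ)
  | .snd e => .snd (e.msubst γ)
  | .lam x τ b => .lam x τ (b.msubst fun y => if y = x then none else γ y)
  | .app e₁ e₂ => .app (e₁.msubst γ) (e₂.msubst γ)
  | .prim f e₁ e₂ => .prim f (e₁.msubst γ) (e₂.msubst γ)

/-- `e[x ↦ v]`. -/
def Tm.subst1 (x : ℕ) (v : Tm) (e : Tm) : Tm :=
  e.msubst fun y => if y = x then some v else none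

/-- Values. -/
inductive IsValue : Tm → Prop
  | lit (n : ℤ) : IsValue (.lit n)
  | pair {v₁ v₂ : Tm} : IsValue v₁ → IsValue v₂ → IsValue (.pair v₁ v₂)
  | lam (x : ℕ) (τ : Ty) (b : Tm) : IsValue (.lam x τ b)

/-- Call-by-value small-step reduction. -/
inductive Step : Tm → Tm → Prop
  | beta {x τ b v} : IsValue v → Step (.app (.lam x τ b) v) (Tm.subst1 x v b)
  | fstPair {v₁ v₂} : IsValue v₁ → IsValue v₂ → Step (.fst (.pair v₁ v₂)) v₁
  | sndPair {v₁ v₂} : IsValue v₁ → IsValue v₂ → Step (.snd (.pair v₁ v₂)) v₂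
  | primOp (f : ℤ → ℤ → ℤ) (n₁ n₂ : ℤ) : Step (.prim f (.lit n₁) (.lit n₂)) (.lit (f n₁ n₂))
  | pairL {e₁ e₁' e₂} : Step e₁ e₁' → Step (.pair e₁ e₂) (.pair e₁' e₂)
  | pairR {v₁ e₂ e₂'} : IsValue v₁ → Step e₂ e₂' → Step (.pair v₁ e₂) (.pair v₁ e₂')
  | fstC {e e'} : Step e e' → Step (.fst e) (.fst e')
  | sndC {e e'} : Step e e' → Step (.snd e) (.snd e')
  | appL {e₁ e₁' e₂} : Step e₁ e₁' → Step (.app e₁ e₂) (.app e₁' e₂)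
  | appR {v₁ e₂ e₂'} : IsValue v₁ → Step e₂ e₂' → Step (.app v₁ e₂) (.app v₁ e₂')
  | primL {f e₁ e₁' e₂} : Step e₁ e₁' → Step (.prim f e₁ e₂) (.prim f e₁' e₂)
  | primR {f v₁ e₂ e₂'} : IsValue v₁ → Step e₂ e₂' → Step (.prim f v₁ e₂) (.prim f v₁ e₂')

/-- `⇝*`: reflexive transitive closure of the reduction relation. -/
def Steps : Tm → Tm → Prop := Relation.ReflTransGen Step

/-- Term contexts. -/
abbrev Ctx : Type := ℕ → Option Ty

def Ctx.empty : Ctx := fun _ => none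

def Ctx.update (Γ : Ctx) (x : ℕ) (τ : Ty) : Ctx := fun y => if y = x then some τ else Γ y

/-- Apply a type substitution to the range of a term context. -/
def Ctx.tsubst (δ : ℕ → Ty) (Γ : Ctx) : Ctx := fun x => (Γ x).map (Ty.subst δ)

/-- The typing judgment `Δ, Γ ⊢ e : τ`. -/
inductive HasTy : Set ℕ → Ctx → Tm → Ty → Prop
  | var {Δ Γ x τ} : Γ x = some τ → HasTy Δ Γ (.var x) τ
  | lit {Δ Γ} (n : ℤ) : HasTy Δ Γ (.lit n) .int
  | pair {Δ Γ e₁ e₂ τ₁ τ₂} : HasTy Δ Γ e₁ τ₁ → HasTy Δ Γ e₂ τ₂ →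
      HasTy Δ Γ (.pair e₁ e₂) (.prod τ₁ τ₂)
  | fst {Δ Γ e τ₁ τ₂} : HasTy Δ Γ e (.prod τ₁ τ₂) → HasTy Δ Γ (.fst e) τ₁
  | snd {Δ Γ e τ₁ τ₂} : HasTy Δ Γ e (.prod τ₁ τ₂) → HasTy Δ Γ (.snd e) τ₂
  | lam {Δ Γ x τ₁ b τ₂} : Ty.wf Δ τ₁ → HasTy Δ (Ctx.update Γ x τ₁) b τ₂ →
      HasTy Δ Γ (.lam x τ₁ b) (.arrow τ₁ τ₂)
  | app {Δ Γ e₁ e₂ τ₁ τ₂} : HasTy Δ Γ e₁ (.arrow τ₁ τ₂) → HasTy Δ Γ e₂ τ₁ →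
      HasTy Δ Γ (.app e₁ e₂) τ₂
  | prim {Δ Γ} (f : ℤ → ℤ → ℤ) {e₁ e₂} : HasTy Δ Γ e₁ .int → HasTy Δ Γ e₂ .int →
      HasTy Δ Γ (.prim f e₁ e₂) .int

/-- `v` is a closed value of (closed) type `τ`. -/
def ClosedVal (τ : Ty) (v : Tm) : Prop := IsValue v ∧ HasTy ∅ Ctx.empty v τ

/-- Binary relations on terms. -/
abbrev Rel : Type := Tm → Tm → Prop

/-- `R ∈ Rel(τ₁, τ₂)`: a binary relation on closed values of closed types `τ₁`, `τ₂`. -/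
def RelOn (τ₁ τ₂ : Ty) (R : Rel) : Prop :=
  Ty.closed τ₁ ∧ Ty.closed τ₂ ∧
  ∀ v₁ v₂, R v₁ v₂ → ClosedVal τ₁ v₁ ∧ ClosedVal τ₂ v₂

/-- Environments: maps from type variables to relations. -/
abbrev TyEnv : Type := ℕ → Rel

/-- The value logical relation `V⟦τ⟧ρ` (FR-Int, FR-Pair, FR-Fun, FR-Var). -/
def Vrel (δ₁ δ₂ : ℕ → Ty) (ρ : TyEnv) : Ty → Rel
  | .int => fun v₁ v₂ => ∃ n : ℤ, v₁ = .lit n ∧ v₂ = .lit n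
  | .tvar a => fun v₁ v₂ => ρ a v₁ v₂
  | .prod t₁ t₂ => fun v₁ v₂ =>
      ∃ a₁ b₁ a₂ b₂, v₁ = .pair a₁ b₁ ∧ v₂ = .pair a₂ b₂ ∧
        Vrel δ₁ δ₂ ρ t₁ a₁ a₂ ∧ Vrel δ₁ δ₂ ρ t₂ b₁ b₂
  | .arrow t₁ t₂ => fun v₁ v₂ =>
      ∀ w₁ w₂, Vrel δ₁ δ₂ ρ t₁ w₁ w₂ →
        HasTy ∅ Ctx.empty (.app v₁ w₁) (t₂.subst δ₁) ∧
        HasTy ∅ Ctx.empty (.app v₂ w₂) (t₂.subst δ₂) ∧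
        ∃ u₁ u₂, Steps (.app v₁ w₁) u₁ ∧ Steps (.app v₂ w₂) u₂ ∧
          IsValue u₁ ∧ IsValue u₂ ∧ Vrel δ₁ δ₂ ρ t₂ u₁ u₂

/-- The term logical relation `E⟦τ⟧ρ` (FR-Term). -/
def Erel (δ₁ δ₂ : ℕ → Ty) (ρ : TyEnv) (τ : Ty) : Rel := fun e₁ e₂ =>
  HasTy ∅ Ctx.empty e₁ (τ.subst δ₁) ∧ HasTy ∅ Ctx.empty e₂ (τ.subst δ₂) ∧
  ∃ v₁ v₂, Steps e₁ v₁ ∧ Steps e₂ v₂ ∧ IsValue v₁ ∧ IsValue v₂ ∧ Vrel δ₁ δ₂ ρ τ v₁ v₂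

/-- `δ ⊨ Δ`: the type substitution sends the variables of `Δ` to closed types. -/
def TySubstOk (Δ : Set ℕ) (δ : ℕ → Ty) : Prop := ∀ a ∈ Δ, (δ a).closed

/-- `ρ ∈ Rel(δ₁, δ₂)`: compatibility of an environment with type substitutions over `Δ`. -/
def EnvCompat (Δ : Set ℕ) (δ₁ δ₂ : ℕ → Ty) (ρ : TyEnv) : Prop :=
  ∀ a ∈ Δ, RelOn (δ₁ a) (δ₂ a) (ρ a)

/-- `γ ⊨ Γ`: the term substitution has the same domain as `Γ`
and maps each variable to a closed value of the right type. -/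
def SubstOk (Γ : Ctx) (γ : ℕ → Option Tm) : Prop :=
  (∀ x, (γ x).isSome ↔ (Γ x).isSome) ∧
  ∀ x τ v, Γ x = some τ → γ x = some v → ClosedVal τ v

/-- `⟨γ₁, γ₂⟩ ∈ V⟦Γ⟧ρ`. -/
def SubstRel (δ₁ δ₂ : ℕ → Ty) (ρ : TyEnv) (Γ : Ctx) (γ₁ γ₂ : ℕ → Option Tm) : Prop :=
  SubstOk (Ctx.tsubst δ₁ Γ) γ₁ ∧ SubstOk (Ctx.tsubst δ₂ Γ) γ₂ ∧
  ∀ x τ, Γ x = some τ → ∃ v₁ v₂, γ₁ x = some v₁ ∧ γ₂ x = some v₂ ∧ Vrel δ₁ δ₂ ρ τ v₁ v₂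

/-- Logical equivalence `Δ, Γ ⊢ e ∼ e' : τ`. -/
def LogEq (Δ : Set ℕ) (Γ : Ctx) (e e' : Tm) (τ : Ty) : Prop :=
  HasTy Δ Γ e τ ∧ HasTy Δ Γ e' τ ∧
  ∀ δ₁ δ₂ ρ γ₁ γ₂, TySubstOk Δ δ₁ → TySubstOk Δ δ₂ → EnvCompat Δ δ₁ δ₂ ρ →
    SubstRel δ₁ δ₂ ρ Γ γ₁ γ₂ →
    Erel δ₁ δ₂ ρ τ (Tm.tsubst δ₁ (Tm.msubst γ₁ e)) (Tm.tsubst δ₂ (Tm.msubst γ₂ e'))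

/-- The environment assigning the empty relation to every type variable. -/
def botEnv : TyEnv := fun _ _ _ => False

/-- A declassification policy `P = ⟨Var_P, D_P⟩`: a finite set of confidential input
variables, and a partial map sending some of them to declassification functions `f`
together with the result type `τ_f` of `f`.

Naming convention for the encoding: for an input variable `x ∈ Var_P`, the term variable
for the confidential input is `2*x`, the term variable `x_f` naming its declassifier is
`2*x + 1`, and its abstract type variable (`α_x` resp. `α_f`) is `x` itself. -/
structure Policy where
  vars : Finset ℕ
  dec : ℕ → Option (Tm × Ty)

/-- Well-formedness of a policy: declassifiable variables are confidential inputs, and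
each declassifier `f` is a closed term of type `int → τ_f` with `τ_f` closed. -/
def Policy.WF (P : Policy) : Prop :=
  (∀ x, (P.dec x).isSome → x ∈ P.vars) ∧
  ∀ x f τf, P.dec x = some (f, τf) →
    Ty.closed τf ∧ HasTy ∅ Ctx.empty f (.arrow .int τf)

/-- `δ_P`: the type substitution sending every type variable of the public view to `int`. -/
def deltaP : ℕ → Ty := fun _ => .int

/-- `Δ_P`: the type context of the public view. -/
def Policy.tyCtx (P : Policy) : Set ℕ := ↑P.vars

/-- `ρ_P`: the environment interpreting `α_x` as the full relation on closed integer
values, and `α_f` as `{(v₁,v₂) : ⊢ v₁,v₂ : int ∧ (f v₁, f v₂) ∈ E⟦τ_f⟧}`. -/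
def Policy.rho (P : Policy) : TyEnv := fun a v₁ v₂ =>
  match P.dec a with
  | none => ClosedVal .int v₁ ∧ ClosedVal .int v₂
  | some (f, τf) =>
      ClosedVal .int v₁ ∧ ClosedVal .int v₂ ∧
      Erel deltaP deltaP botEnv τf (.app f v₁) (.app f v₂)

/-- `Γ_P`: the term context of the public view: `x : α_x` (resp. `x : α_f` and
`x_f : α_f → τ_f` when `x` is declassifiable via `f : int → τ_f`). -/
def Policy.pubCtx (P : Policy) : Ctx := fun n =>
  if n % 2 = 0 then
    (if n / 2 ∈ P.vars then some (.tvar (n / 2)) else none)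
  else
    (P.dec (n / 2)).map (fun p => Ty.arrow (.tvar (n / 2)) p.2)

/-- `Γ_{C,P}`: the confidential view: `x : int` and `x_f : int → τ_f`. -/
def Policy.confCtx (P : Policy) : Ctx := fun n =>
  if n % 2 = 0 then
    (if n / 2 ∈ P.vars then some .int else none)
  else
    (P.dec (n / 2)).map (fun p => Ty.arrow .int p.2)

/-- Indistinguishability on values, `Ind_val⟦τ⟧` (Fig. 3: Eq-Int, Eq-Pair, Eq-Fun,
Eq-Var1, Eq-Var2). -/
def Policy.IndVal (P : Policy) : Ty → Rel
  | .int => fun v₁ v₂ => ∃ n : ℤ, v₁ = .lit n ∧ v₂ = .lit n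
  | .tvar a => fun v₁ v₂ =>
      match P.dec a with
      | none => ClosedVal .int v₁ ∧ ClosedVal .int v₂
      | some (f, τf) =>
          ClosedVal .int v₁ ∧ ClosedVal .int v₂ ∧
          Erel deltaP deltaP botEnv τf (.app f v₁) (.app f v₂)
  | .prod t₁ t₂ => fun v₁ v₂ =>
      ∃ a₁ b₁ a₂ b₂, v₁ = .pair a₁ b₁ ∧ v₂ = .pair a₂ b₂ ∧
        Policy.IndVal P t₁ a₁ a₂ ∧ Policy.IndVal P t₂ b₁ b₂
  | .arrow t₁ t₂ => fun v₁ v₂ =>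
      ∀ w₁ w₂, Policy.IndVal P t₁ w₁ w₂ →
        HasTy ∅ Ctx.empty (.app v₁ w₁) (t₂.subst deltaP) ∧
        HasTy ∅ Ctx.empty (.app v₂ w₂) (t₂.subst deltaP) ∧
        ∃ u₁ u₂, Steps (.app v₁ w₁) u₁ ∧ Steps (.app v₂ w₂) u₂ ∧
          IsValue u₁ ∧ IsValue u₂ ∧ Policy.IndVal P t₂ u₁ u₂

/-- Indistinguishability on terms, `Ind_term⟦τ⟧` (Eq-Term). -/
def Policy.IndTerm (P : Policy) (τ : Ty) : Rel := fun e₁ e₂ =>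
  HasTy ∅ Ctx.empty e₁ (τ.subst deltaP) ∧ HasTy ∅ Ctx.empty e₂ (τ.subst deltaP) ∧
  ∃ v₁ v₂, Steps e₁ v₁ ∧ Steps e₂ v₂ ∧ IsValue v₁ ∧ IsValue v₂ ∧ Policy.IndVal P τ v₁ v₂

/-- `⟨γ₁, γ₂⟩ ∈ Ind⟦P⟧`: indistinguishable term substitutions: both respect `δ_P(Γ_P)`,
both map each declassifier variable `x_f` to the policy function `f`, and they map all
other variables of the domain to indistinguishable values at their public-view types. -/
def Policy.IndSubst (P : Policy) (γ₁ γ₂ : ℕ → Option Tm) : Prop :=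
  SubstOk (Ctx.tsubst deltaP P.pubCtx) γ₁ ∧ SubstOk (Ctx.tsubst deltaP P.pubCtx) γ₂ ∧
  (∀ x f τf, P.dec x = some (f, τf) →
    γ₁ (2 * x + 1) = some f ∧ γ₂ (2 * x + 1) = some f) ∧
  (∀ x ∈ P.vars, ∃ v₁ v₂, γ₁ (2 * x) = some v₁ ∧ γ₂ (2 * x) = some v₂ ∧
    Policy.IndVal P (.tvar x) v₁ v₂)

/-- A term has no type variables when all its type annotations are closed. -/
def Tm.noTyVars : Tm → Prop
  | .var _ => True
  | .lit _ => True
  | .pair e₁ e₂ => e₁.noTyVars ∧ e₂.noTyVars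
  | .fst e => e.noTyVars
  | .snd e => e.noTyVars
  | .lam _ τ b => τ.closed ∧ b.noTyVars
  | .app e₁ e₂ => e₁.noTyVars ∧ e₂.noTyVars
  | .prim _ e₁ e₂ => e₁.noTyVars ∧ e₂.noTyVars

/-- Type-based relaxed noninterference, `TRNI(P, τ)` (Def. 4): `e` is typable in the
confidential view, `τ` is well-formed in the public type context, and indistinguishable
substitutions are mapped to indistinguishable results. -/
def Policy.TRNI (P : Policy) (τ : Ty) (e : Tm) : Prop :=
  (∃ τ', HasTy ∅ P.confCtx e τ') ∧ Ty.wf P.tyCtx τ ∧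
  ∀ γ₁ γ₂, P.IndSubst γ₁ γ₂ → P.IndTerm τ (e.msubst γ₁) (e.msubst γ₂)

/-- The parity policy `P_OE`: a single confidential input `x` (encoded as input
variable `0`) that may be declassified via `f = λx:int. x mod 2`. -/
def fOE : Tm := .lam 0 .int (.prim (fun a b => a % b) (.var 0) (.lit 2))

def pOE : Policy where
  vars := {0}
  dec := fun x => if x = 0 then some (fOE, .int) else none

/-! ### Auxiliary lemmas -/

lemma Ty.subst_closed_id {τ : Ty} (h : τ.closed) (δ : ℕ → Ty) : τ.subst δ = τ := by
  induction τ with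
  | int => rfl
  | tvar a => exact absurd h (by simp [Ty.closed, Ty.wf])
  | prod t₁ t₂ ih₁ ih₂ =>
      obtain ⟨h₁, h₂⟩ := h
      simp [Ty.subst, ih₁ h₁, ih₂ h₂]
  | arrow t₁ t₂ ih₁ ih₂ =>
      obtain ⟨h₁, h₂⟩ := h
      simp [Ty.subst, ih₁ h₁, ih₂ h₂]

lemma Ty.wf.mono {Δ Δ' : Set ℕ} {τ : Ty} (hτ : τ.wf Δ) (h : Δ ⊆ Δ') : τ.wf Δ' := by
  induction τ with
  | int => trivial
  | tvar a => exact h hτ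
  | prod t₁ t₂ ih₁ ih₂ => exact ⟨ih₁ hτ.1, ih₂ hτ.2⟩
  | arrow t₁ t₂ ih₁ ih₂ => exact ⟨ih₁ hτ.1, ih₂ hτ.2⟩

lemma hasTy_weaken {Δ Γ Γ' e τ} (ht : HasTy Δ Γ e τ)
    (h : ∀ x τ', Γ x = some τ' → Γ' x = some τ') : HasTy Δ Γ' e τ := by
  induction ht generalizing Γ' with
  | var hx => exact .var (h _ _ hx)
  | lit n => exact .lit n
  | pair _ _ ih₁ ih₂ => exact .pair (ih₁ h) (ih₂ h)
  | fst _ ih => exact .fst (ih h)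
  | snd _ ih => exact .snd (ih h)
  | @lam _ x τ₁ b τ₂ hwf _ ih =>
      refine .lam hwf (ih fun y τ' hy => ?_)
      by_cases hyx : y = x
      · simpa [Ctx.update, hyx] using hy
      · simp only [Ctx.update, if_neg hyx] at hy ⊢; exact h _ _ hy
  | app _ _ ih₁ ih₂ => exact .app (ih₁ h) (ih₂ h)
  | prim f _ _ ih₁ ih₂ => exact .prim f (ih₁ h) (ih₂ h)

lemma hasTy_unique {Δ Γ e τ τ'} (h1 : HasTy Δ Γ e τ) (h2 : HasTy Δ Γ e τ') : τ = τ' := by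
  induction h1 generalizing τ' with
  | var hx => cases h2 with | var hx' => rw [hx] at hx'; exact (Option.some_inj.mp hx')
  | lit n => cases h2; rfl
  | pair _ _ ih₁ ih₂ => cases h2 with | pair a b => rw [ih₁ a, ih₂ b]
  | fst _ ih =>
      cases h2 with
      | fst a => injection (ih a) with h1 h2
  | snd _ ih =>
      cases h2 with
      | snd a => injection (ih a) with h1 h2
  | lam hwf _ ih => cases h2 with | lam _ b => rw [ih b]
  | app _ _ ih₁ ih₂ =>
      cases h2 with
      | app a b => injection (ih₁ a) with h1 h2
  | prim f _ _ _ _ => cases h2; rfl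

lemma hasTy_regular {Δ Γ e τ} (ht : HasTy Δ Γ e τ)
    (hΓ : ∀ x τ', Γ x = some τ' → Ty.wf Δ τ') : Ty.wf Δ τ := by
  induction ht with
  | var hx => exact hΓ _ _ hx
  | lit n => trivial
  | pair _ _ ih₁ ih₂ => exact ⟨ih₁ hΓ, ih₂ hΓ⟩
  | fst _ ih => exact (ih hΓ).1
  | snd _ ih => exact (ih hΓ).2
  | lam hwf _ ih =>
      refine ⟨hwf, ih fun y τ' hy => ?_⟩
      unfold Ctx.update at hy
      split at hy
      · cases hy; exact hwf
      · exact hΓ _ _ hy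
  | app _ _ ih₁ ih₂ => exact (ih₁ hΓ).2
  | prim f _ _ _ _ => trivial

lemma hasTy_tsubst {Δ Γ e τ} (δ : ℕ → Ty) (ht : HasTy Δ Γ e τ) (hno : e.noTyVars) :
    HasTy ∅ (Ctx.tsubst δ Γ) e (τ.subst δ) := by
  induction ht with
  | var hx => exact .var (by simp [Ctx.tsubst, hx])
  | lit n => exact .lit n
  | pair _ _ ih₁ ih₂ => exact .pair (ih₁ hno.1) (ih₂ hno.2)
  | fst _ ih => exact .fst (ih hno)
  | snd _ ih => exact .snd (ih hno)
  | @lam Γ' x τ₁ b τ₂ hwf _ ih =>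
      have hc : Ty.closed τ₁ := hno.1
      have heq : Ctx.tsubst δ (Ctx.update Γ' x τ₁) = Ctx.update (Ctx.tsubst δ Γ') x (τ₁.subst δ) := by
        funext y; simp only [Ctx.tsubst, Ctx.update]; split <;> rfl
      have hb := ih hno.2
      rw [heq] at hb
      show HasTy ∅ _ _ (.arrow (τ₁.subst δ) (τ₂.subst δ))
      rw [Ty.subst_closed_id hc] at hb ⊢
      exact .lam hc hb
  | app _ _ ih₁ ih₂ => exact .app (ih₁ hno.1) (ih₂ hno.2)
  | prim f _ _ ih₁ ih₂ => exact .prim f (ih₁ hno.1) (ih₂ hno.2)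

lemma hasTy_mono_delta {Δ Δ' Γ e τ} (ht : HasTy Δ Γ e τ) (h : Δ ⊆ Δ') : HasTy Δ' Γ e τ := by
  induction ht with
  | var hx => exact .var hx
  | lit n => exact .lit n
  | pair _ _ ih₁ ih₂ => exact .pair ih₁ ih₂
  | fst _ ih => exact .fst ih
  | snd _ ih => exact .snd ih
  | lam hwf _ ih => exact .lam (hwf.mono h) ih
  | app _ _ ih₁ ih₂ => exact .app ih₁ ih₂
  | prim f _ _ ih₁ ih₂ => exact .prim f ih₁ ih₂

lemma msubst_closed {Δ Γ e τ} (ht : HasTy Δ Γ e τ) :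
    ∀ γ : ℕ → Option Tm, (∀ y, (Γ y).isSome → γ y = none) → e.msubst γ = e := by
  induction ht with
  | @var Γ' x τ' hx =>
      intro γ h
      have hn : γ x = none := h x (by simp [hx])
      show (γ x).getD (Tm.var x) = Tm.var x
      simp [hn]
  | lit n => intro γ h; rfl
  | pair _ _ ih₁ ih₂ => intro γ h; simp [Tm.msubst, ih₁ γ h, ih₂ γ h]
  | fst _ ih => intro γ h; simp [Tm.msubst, ih γ h]
  | snd _ ih => intro γ h; simp [Tm.msubst, ih γ h]
  | @lam Γ' x τ₁ b τ₂ hwf _ ih =>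
      intro γ h
      simp only [Tm.msubst, Tm.lam.injEq]
      refine ⟨trivial, trivial, ih _ fun y hy => ?_⟩
      by_cases hyx : y = x
      · simp [hyx]
      · simp only [Ctx.update, if_neg hyx] at hy
        simp [hyx, h _ hy]
  | app _ _ ih₁ ih₂ => intro γ h; simp [Tm.msubst, ih₁ γ h, ih₂ γ h]
  | prim f _ _ ih₁ ih₂ => intro γ h; simp [Tm.msubst, ih₁ γ h, ih₂ γ h]

lemma msubst_hasTy {Δ Γ e τ} (ht : HasTy Δ Γ e τ) :
    ∀ γ : ℕ → Option Tm, (∀ x τ' v, Γ x = some τ' → γ x = some v → ClosedVal τ' v) →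
    HasTy Δ (fun y => if (γ y).isSome then none else Γ y) (e.msubst γ) τ := by
  induction ht with
  | @var Γ' x τ' hx =>
      intro γ h
      cases hγ : γ x with
      | none =>
          have he : Tm.msubst γ (Tm.var x) = Tm.var x := by
            show (γ x).getD _ = _; simp [hγ]
          rw [he]
          exact .var (by simp [hγ, hx])
      | some v =>
          have hv := (h x τ' v hx hγ).2
          have hv' : HasTy Δ Ctx.empty v τ' := hasTy_mono_delta hv (by simp)
          simp only [Tm.msubst, hγ, Option.getD_some]
          exact hasTy_weaken hv' (fun y τ' hy => by simp [Ctx.empty] at hy)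
  | lit n => intro γ h; exact .lit n
  | pair _ _ ih₁ ih₂ => intro γ h; exact .pair (ih₁ γ h) (ih₂ γ h)
  | fst _ ih => intro γ h; exact .fst (ih γ h)
  | snd _ ih => intro γ h; exact .snd (ih γ h)
  | @lam Γ' x τ₁ b τ₂ hwf _ ih =>
      intro γ h
      refine .lam hwf ?_
      have h' : ∀ y τ' v, Ctx.update Γ' x τ₁ y = some τ' →
          (fun y => if y = x then none else γ y) y = some v → ClosedVal τ' v := by
        intro y τ' v hy hγy
        by_cases hyx : y = x
        · simp [hyx] at hγy
        · simp only [if_neg hyx] at hγy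
          simp only [Ctx.update, if_neg hyx] at hy
          exact h y τ' v hy hγy
      have := ih _ h'
      have hctx : (fun y => if ((fun y => if y = x then none else γ y) y).isSome then none
            else Ctx.update Γ' x τ₁ y) =
          Ctx.update (fun y => if (γ y).isSome then none else Γ' y) x τ₁ := by
        funext y
        by_cases hyx : y = x <;> simp [Ctx.update, hyx]
      rw [hctx] at this
      exact this
  | app _ _ ih₁ ih₂ => intro γ h; exact .app (ih₁ γ h) (ih₂ γ h)
  | prim f _ _ ih₁ ih₂ => intro γ h; exact .prim f (ih₁ γ h) (ih₂ γ h)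

lemma msubst_none (e : Tm) : e.msubst (fun _ => none) = e := by
  induction e with
  | var x => rfl
  | lit n => rfl
  | pair e₁ e₂ ih₁ ih₂ => simp [Tm.msubst, ih₁, ih₂]
  | fst e ih => simp [Tm.msubst, ih]
  | snd e ih => simp [Tm.msubst, ih]
  | lam x τ b ih => simp only [Tm.msubst, Tm.lam.injEq]; exact ⟨trivial, trivial, by simpa using ih⟩
  | app e₁ e₂ ih₁ ih₂ => simp [Tm.msubst, ih₁, ih₂]
  | prim f e₁ e₂ ih₁ ih₂ => simp [Tm.msubst, ih₁, ih₂]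

lemma subst1_msubst (b : Tm) (x : ℕ) (v : Tm) :
    ∀ γ : ℕ → Option Tm, (∀ y u, γ y = some u → ∀ σ, Tm.msubst σ u = u) →
    Tm.subst1 x v (b.msubst (fun y => if y = x then none else γ y)) =
    b.msubst (fun y => if y = x then some v else γ y) := by
  induction b with
  | var y =>
      intro γ hγ
      by_cases hyx : y = x
      · show Tm.subst1 x v ((if y = x then none else γ y).getD (Tm.var y)) =
            (if y = x then some v else γ y).getD (Tm.var y)
        simp only [if_pos hyx, Option.getD_none]
        show ((if y = x then some v else none).getD (Tm.var y)) = _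
        simp [hyx]
      · show Tm.subst1 x v ((if y = x then none else γ y).getD (Tm.var y)) = (if y = x then some v else γ y).getD (Tm.var y)
        simp only [if_neg hyx]
        cases hu : γ y with
        | none =>
            show ((if y = x then some v else none).getD (Tm.var y)) = _
            simp [hyx]
        | some u => simpa [Tm.subst1] using hγ y u hu _
  | lit n => intro γ hγ; rfl
  | pair e₁ e₂ ih₁ ih₂ =>
      intro γ hγ
      show Tm.pair (Tm.subst1 x v _) (Tm.subst1 x v _) = Tm.pair _ _
      rw [ih₁ γ hγ, ih₂ γ hγ]
  | fst e ih =>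
      intro γ hγ
      show Tm.fst (Tm.subst1 x v _) = Tm.fst _
      rw [ih γ hγ]
  | snd e ih =>
      intro γ hγ
      show Tm.snd (Tm.subst1 x v _) = Tm.snd _
      rw [ih γ hγ]
  | lam z τ body ih =>
      intro γ hγ
      by_cases hzx : z = x
      · subst hzx
        show Tm.lam z τ (Tm.msubst _ (Tm.msubst _ body)) = Tm.lam z τ (Tm.msubst _ body)
        have h2 : (fun y => if y = z then none else if y = z then some v else none)
            = (fun _ : ℕ => (none : Option Tm)) := by
          funext y; by_cases hy : y = z <;> simp [hy]
        have h1 : (fun y => if y = z then none else if y = z then none else γ y)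
            = (fun y => if y = z then none else γ y) := by
          funext y; by_cases hy : y = z <;> simp [hy]
        rw [h2, msubst_none, h1]
        have h4 : (fun y => if y = z then none else γ y)
            = (fun y => if y = z then none else (fun w => if w = z then some v else γ w) y) := by
          funext y; by_cases hy : y = z <;> simp [hy]
        rw [h4]
      · show Tm.lam z τ (Tm.msubst _ (Tm.msubst _ body)) = Tm.lam z τ (Tm.msubst _ body)
        have h2 : (fun y => if y = z then none else if y = x then some v else none)
            = (fun y => if y = x then some v else none) := by
          funext y
          by_cases hy : y = z
          · subst hy; simp [hzx]
          · simp [hy]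
        have h1 : (fun y => if y = z then none else if y = x then none else γ y)
            = (fun y => if y = x then none else (fun w => if w = z then none else γ w) y) := by
          funext y
          by_cases hy : y = z
          · subst hy; simp [hzx]
          · by_cases hyx : y = x <;> simp [hy, hyx, Ne.symm hzx]
        have h3 : (fun y => if y = x then some v else (fun w => if w = z then none else γ w) y)
            = (fun y => if y = z then none else if y = x then some v else γ y) := by
          funext y
          by_cases hy : y = z
          · subst hy; simp [hzx]
          · by_cases hyx : y = x <;> simp [hy, hyx, Ne.symm hzx]
        have hγ' : ∀ y u, (fun w => if w = z then none else γ w) y = some u →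
            ∀ σ, Tm.msubst σ u = u := by
          intro y u hy σ
          by_cases hyz : y = z
          · simp [hyz] at hy
          · simp only [if_neg hyz] at hy; exact hγ y u hy σ
        rw [h2, h1]
        show Tm.lam z τ (Tm.subst1 x v (Tm.msubst _ body)) = _
        rw [ih _ hγ', h3]
  | app e₁ e₂ ih₁ ih₂ =>
      intro γ hγ
      show Tm.app (Tm.subst1 x v _) (Tm.subst1 x v _) = Tm.app _ _
      rw [ih₁ γ hγ, ih₂ γ hγ]
  | prim f e₁ e₂ ih₁ ih₂ =>
      intro γ hγ
      show Tm.prim f (Tm.subst1 x v _) (Tm.subst1 x v _) = Tm.prim f _ _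
      rw [ih₁ γ hγ, ih₂ γ hγ]

lemma value_not_step {v e : Tm} (hv : IsValue v) (h : Step v e) : False := by
  induction hv generalizing e with
  | lit n => cases h
  | pair h1 h2 ih1 ih2 =>
      cases h with
      | pairL hs => exact ih1 hs
      | pairR _ hs => exact ih2 hs
  | lam x τ b => cases h

lemma step_det {e a b : Tm} (h1 : Step e a) (h2 : Step e b) : a = b := by
  induction h1 generalizing b with
  | beta hv =>
      cases h2 with
      | beta _ => rfl
      | appL hs => exact absurd hs (fun hs => value_not_step (.lam _ _ _) hs)
      | appR _ hs => exact absurd hs (fun hs => value_not_step hv hs)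
  | fstPair hv1 hv2 =>
      cases h2 with
      | fstPair _ _ => rfl
      | fstC hs => exact absurd hs (fun hs => value_not_step (.pair hv1 hv2) hs)
  | sndPair hv1 hv2 =>
      cases h2 with
      | sndPair _ _ => rfl
      | sndC hs => exact absurd hs (fun hs => value_not_step (.pair hv1 hv2) hs)
  | primOp f n₁ n₂ =>
      cases h2 with
      | primOp _ _ _ => rfl
      | primL hs => exact absurd hs (fun hs => value_not_step (.lit _) hs)
      | primR _ hs => exact absurd hs (fun hs => value_not_step (.lit _) hs)
  | pairL hs ih =>
      cases h2 with
      | pairL hs' => rw [ih hs']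
      | pairR hv' _ => exact absurd hs (fun hs => value_not_step hv' hs)
  | pairR hv hs ih =>
      cases h2 with
      | pairL hs' => exact absurd hs' (fun hs' => value_not_step hv hs')
      | pairR _ hs' => rw [ih hs']
  | fstC hs ih =>
      cases h2 with
      | fstPair hv1 hv2 => exact absurd hs (fun hs => value_not_step (.pair hv1 hv2) hs)
      | fstC hs' => rw [ih hs']
  | sndC hs ih =>
      cases h2 with
      | sndPair hv1 hv2 => exact absurd hs (fun hs => value_not_step (.pair hv1 hv2) hs)
      | sndC hs' => rw [ih hs']
  | appL hs ih =>
      cases h2 with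
      | beta hv' => exact absurd hs (fun hs => value_not_step (.lam _ _ _) hs)
      | appL hs' => rw [ih hs']
      | appR hv' _ => exact absurd hs (fun hs => value_not_step hv' hs)
  | appR hv hs ih =>
      cases h2 with
      | beta hv' => exact absurd hs (fun hs => value_not_step hv' hs)
      | appL hs' => exact absurd hs' (fun hs' => value_not_step hv hs')
      | appR _ hs' => rw [ih hs']
  | primL hs ih =>
      cases h2 with
      | primOp _ _ _ => exact absurd hs (fun hs => value_not_step (.lit _) hs)
      | primL hs' => rw [ih hs']
      | primR hv' _ => exact absurd hs (fun hs => value_not_step hv' hs)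
  | primR hv hs ih =>
      cases h2 with
      | primOp _ _ _ => exact absurd hs (fun hs => value_not_step (.lit _) hs)
      | primL hs' => exact absurd hs' (fun hs' => value_not_step hv hs')
      | primR _ hs' => rw [ih hs']

/-- Determinism: if `a ⇝* u` with `u` a value, then any reduct of `a` also reaches `u`. -/
lemma steps_confl {a b u : Tm} (hab : Steps a b) (hau : Steps a u) (hu : IsValue u) :
    Steps b u := by
  induction hab with
  | refl => exact hau
  | @tail c d hac hcd ih =>
      have hcu : Steps c u := ih
      rcases (Relation.reflTransGen_iff_eq_or_transGen.mp hcu) with h | h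
      · subst h; exact absurd hcd (fun hcd => value_not_step hu hcd)
      · obtain ⟨e, he, heu⟩ := Relation.TransGen.head'_iff.mp h
        rw [step_det hcd he]
        exact heu

lemma steps_pairL {e₁ e₁' e₂ : Tm} (h : Steps e₁ e₁') : Steps (.pair e₁ e₂) (.pair e₁' e₂) :=
  Relation.ReflTransGen.lift (fun e => Tm.pair e e₂) (fun _ _ hs => Step.pairL hs) _ _ h

lemma steps_pairR {v₁ e₂ e₂' : Tm} (hv : IsValue v₁) (h : Steps e₂ e₂') :
    Steps (.pair v₁ e₂) (.pair v₁ e₂') :=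
  Relation.ReflTransGen.lift (fun e => Tm.pair v₁ e) (fun _ _ hs => Step.pairR hv hs) _ _ h

lemma steps_fst {e e' : Tm} (h : Steps e e') : Steps (.fst e) (.fst e') :=
  Relation.ReflTransGen.lift Tm.fst (fun _ _ hs => Step.fstC hs) _ _ h

lemma steps_snd {e e' : Tm} (h : Steps e e') : Steps (.snd e) (.snd e') :=
  Relation.ReflTransGen.lift Tm.snd (fun _ _ hs => Step.sndC hs) _ _ h

lemma steps_appL {e₁ e₁' e₂ : Tm} (h : Steps e₁ e₁') : Steps (.app e₁ e₂) (.app e₁' e₂) :=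
  Relation.ReflTransGen.lift (fun e => Tm.app e e₂) (fun _ _ hs => Step.appL hs) _ _ h

lemma steps_appR {v₁ e₂ e₂' : Tm} (hv : IsValue v₁) (h : Steps e₂ e₂') :
    Steps (.app v₁ e₂) (.app v₁ e₂') :=
  Relation.ReflTransGen.lift (fun e => Tm.app v₁ e) (fun _ _ hs => Step.appR hv hs) _ _ h

lemma steps_primL {f} {e₁ e₁' e₂ : Tm} (h : Steps e₁ e₁') :
    Steps (.prim f e₁ e₂) (.prim f e₁' e₂) :=
  Relation.ReflTransGen.lift (fun e => Tm.prim f e e₂) (fun _ _ hs => Step.primL hs) _ _ h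

lemma steps_primR {f} {v₁ e₂ e₂' : Tm} (hv : IsValue v₁) (h : Steps e₂ e₂') :
    Steps (.prim f v₁ e₂) (.prim f v₁ e₂') :=
  Relation.ReflTransGen.lift (fun e => Tm.prim f v₁ e) (fun _ _ hs => Step.primR hv hs) _ _ h

/-- From a terminating reduction of an application, the function part reaches a value. -/
lemma steps_app_inv {a u : Tm} (h : Steps a u) (hu : IsValue u) :
    ∀ e₁ e₂, a = .app e₁ e₂ → ∃ v, Steps e₁ v ∧ IsValue v := by
  induction h using Relation.ReflTransGen.head_induction_on with
  | refl => intro e₁ e₂ he; subst he; cases hu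
  | @head a c hac hcu ih =>
      intro e₁ e₂ he; subst he
      cases hac with
      | beta hv => exact ⟨_, .refl, .lam _ _ _⟩
      | appL hs =>
          obtain ⟨v, hv, hval⟩ := ih _ _ rfl
          exact ⟨v, .head hs hv, hval⟩
      | appR hv₁ _ => exact ⟨e₁, .refl, hv₁⟩

lemma preservation {e e' τ} (hs : Step e e') (ht : HasTy ∅ Ctx.empty e τ) :
    HasTy ∅ Ctx.empty e' τ := by
  induction hs generalizing τ with
  | @beta x τ₁ b v hv =>
      cases ht with
      | app h1 h2 =>
          cases h1 with
          | lam hwf hb =>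
              have := msubst_hasTy hb (fun y => if y = x then some v else none)
                (by
                  intro y τ' w hy hw
                  by_cases hyx : y = x
                  · subst hyx
                    simp only [if_pos rfl, Option.some_inj, if_true, eq_self_iff_true] at hw
                    simp only [Ctx.update, if_pos rfl, Option.some_inj, if_true,
                      eq_self_iff_true] at hy
                    subst hw; subst hy
                    exact ⟨hv, h2⟩
                  · simp [hyx] at hw)
              have hctx : (fun y => if ((fun y => if y = x then some v else none) y).isSome
                  then none else Ctx.update Ctx.empty x τ₁ y) = Ctx.empty := by
                funext y
                by_cases hyx : y = x <;> simp [Ctx.update, Ctx.empty, hyx]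
              rw [hctx] at this
              exact this
  | fstPair hv1 hv2 => cases ht with | fst h => cases h with | pair h1 h2 => exact h1
  | sndPair hv1 hv2 => cases ht with | snd h => cases h with | pair h1 h2 => exact h2
  | primOp f n₁ n₂ => cases ht with | prim _ _ _ => exact .lit _
  | pairL _ ih => cases ht with | pair h1 h2 => exact .pair (ih h1) h2
  | pairR _ _ ih => cases ht with | pair h1 h2 => exact .pair h1 (ih h2)
  | fstC _ ih => cases ht with | fst h => exact .fst (ih h)
  | sndC _ ih => cases ht with | snd h => exact .snd (ih h)
  | appL _ ih => cases ht with | app h1 h2 => exact .app (ih h1) h2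
  | appR _ _ ih => cases ht with | app h1 h2 => exact .app h1 (ih h2)
  | primL _ ih => cases ht with | prim g h1 h2 => exact .prim _ (ih h1) h2
  | primR _ _ ih => cases ht with | prim g h1 h2 => exact .prim _ h1 (ih h2)

lemma preservation_steps {e e' τ} (hs : Steps e e') (ht : HasTy ∅ Ctx.empty e τ) :
    HasTy ∅ Ctx.empty e' τ := by
  induction hs with
  | refl => exact ht
  | tail _ h ih => exact preservation h ih

lemma vrel_closed {δ₁ δ₂ : ℕ → Ty} {ρ : TyEnv} : ∀ τ : Ty, τ.closed →
    (∀ e₁ e₂, Vrel δ₁ δ₂ ρ τ e₁ e₂ →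
        HasTy ∅ Ctx.empty e₁ τ ∧ HasTy ∅ Ctx.empty e₂ τ) ∧
    (∃ v₁ v₂, IsValue v₁ ∧ IsValue v₂ ∧ Vrel δ₁ δ₂ ρ τ v₁ v₂) ∧
    (∀ e₁ e₂, Vrel δ₁ δ₂ ρ τ e₁ e₂ → ∃ v₁ v₂, Steps e₁ v₁ ∧ Steps e₂ v₂ ∧
        IsValue v₁ ∧ IsValue v₂ ∧ Vrel δ₁ δ₂ ρ τ v₁ v₂) := by
  intro τ
  induction τ with
  | int =>
      intro _
      refine ⟨?_, ⟨.lit 0, .lit 0, .lit 0, .lit 0, 0, rfl, rfl⟩, ?_⟩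
      · rintro e₁ e₂ ⟨n, rfl, rfl⟩; exact ⟨.lit n, .lit n⟩
      · rintro e₁ e₂ ⟨n, rfl, rfl⟩
        exact ⟨.lit n, .lit n, .refl, .refl, .lit n, .lit n, n, rfl, rfl⟩
  | tvar a => intro hc; exact absurd hc (by simp [Ty.closed, Ty.wf])
  | prod t₁ t₂ ih₁ ih₂ =>
      intro hc
      obtain ⟨A₁, B₁, C₁⟩ := ih₁ hc.1
      obtain ⟨A₂, B₂, C₂⟩ := ih₂ hc.2
      refine ⟨?_, ?_, ?_⟩
      · rintro e₁ e₂ ⟨a₁, b₁, a₂, b₂, rfl, rfl, ha, hb⟩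
        exact ⟨.pair (A₁ _ _ ha).1 (A₂ _ _ hb).1, .pair (A₁ _ _ ha).2 (A₂ _ _ hb).2⟩
      · obtain ⟨v₁, v₂, hv₁, hv₂, hv⟩ := B₁
        obtain ⟨w₁, w₂, hw₁, hw₂, hw⟩ := B₂
        exact ⟨.pair v₁ w₁, .pair v₂ w₂, .pair hv₁ hw₁, .pair hv₂ hw₂,
          v₁, w₁, v₂, w₂, rfl, rfl, hv, hw⟩
      · rintro e₁ e₂ ⟨a₁, b₁, a₂, b₂, rfl, rfl, ha, hb⟩
        obtain ⟨a₁', a₂', hsa₁, hsa₂, hva₁, hva₂, ha'⟩ := C₁ _ _ ha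
        obtain ⟨b₁', b₂', hsb₁, hsb₂, hvb₁, hvb₂, hb'⟩ := C₂ _ _ hb
        refine ⟨.pair a₁' b₁', .pair a₂' b₂', ?_, ?_, .pair hva₁ hvb₁, .pair hva₂ hvb₂,
          a₁', b₁', a₂', b₂', rfl, rfl, ha', hb'⟩
        · exact .trans (steps_pairL hsa₁) (steps_pairR hva₁ hsb₁)
        · exact .trans (steps_pairL hsa₂) (steps_pairR hva₂ hsb₂)
  | arrow t₁ t₂ ih₁ ih₂ =>
      intro hc
      obtain ⟨A₁, B₁, C₁⟩ := ih₁ hc.1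
      obtain ⟨A₂, B₂, C₂⟩ := ih₂ hc.2
      have hs₁ : Ty.subst δ₁ t₂ = t₂ := Ty.subst_closed_id hc.2 δ₁
      have hs₂ : Ty.subst δ₂ t₂ = t₂ := Ty.subst_closed_id hc.2 δ₂
      obtain ⟨w₁, w₂, hw₁, hw₂, hw⟩ := B₁
      have hB : ∃ v₁ v₂, IsValue v₁ ∧ IsValue v₂ ∧ Vrel δ₁ δ₂ ρ (.arrow t₁ t₂) v₁ v₂ := by
        obtain ⟨u₁, u₂, hu₁, hu₂, hu⟩ := B₂
        have htu₁ := (A₂ _ _ hu).1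
        have htu₂ := (A₂ _ _ hu).2
        refine ⟨.lam 0 t₁ u₁, .lam 0 t₁ u₂, .lam _ _ _, .lam _ _ _, ?_⟩
        intro w₁' w₂' hw'
        have htw₁ := (A₁ _ _ hw').1
        have htw₂ := (A₁ _ _ hw').2
        have hland : ∀ u, HasTy ∅ Ctx.empty u t₂ →
            HasTy ∅ Ctx.empty (Tm.lam 0 t₁ u) (.arrow t₁ t₂) := by
          intro u hu'
          exact .lam hc.1 (hasTy_weaken hu' (fun y τ' hy => by simp [Ctx.empty] at hy))
        refine ⟨by rw [hs₁]; exact .app (hland _ htu₁) htw₁, by rw [hs₂]; exact .app (hland _ htu₂) htw₂, ?_⟩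
        obtain ⟨w₁'', w₂'', hsw₁, hsw₂, hvw₁, hvw₂, hw''⟩ := C₁ _ _ hw'
        have hbeta : ∀ u w'', IsValue w'' →
            Steps (Tm.app (Tm.lam 0 t₁ u) w'') u → True := fun _ _ _ _ => trivial
        have hsub₁ : Tm.subst1 0 w₁'' u₁ = u₁ :=
          msubst_closed htu₁ _ (fun y hy => by simp [Ctx.empty] at hy)
        have hsub₂ : Tm.subst1 0 w₂'' u₂ = u₂ :=
          msubst_closed htu₂ _ (fun y hy => by simp [Ctx.empty] at hy)
        refine ⟨u₁, u₂, ?_, ?_, hu₁, hu₂, hu⟩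
        · refine .tail (steps_appR (.lam _ _ _) hsw₁) ?_
          have := Step.beta (x := 0) (τ := t₁) (b := u₁) hvw₁
          rwa [hsub₁] at this
        · refine .tail (steps_appR (.lam _ _ _) hsw₂) ?_
          have := Step.beta (x := 0) (τ := t₁) (b := u₂) hvw₂
          rwa [hsub₂] at this
      refine ⟨?_, hB, ?_⟩
      · intro e₁ e₂ h
        obtain ⟨hty₁, hty₂, _⟩ := h w₁ w₂ hw
        rw [hs₁] at hty₁; rw [hs₂] at hty₂
        constructor
        · cases hty₁ with
          | app hf ha => cases hasTy_unique ha (A₁ _ _ hw).1; exact hf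
        · cases hty₂ with
          | app hf ha => cases hasTy_unique ha (A₁ _ _ hw).2; exact hf
      · intro e₁ e₂ h
        obtain ⟨_, _, u₁, u₂, hsu₁, hsu₂, hvu₁, hvu₂, _⟩ := h w₁ w₂ hw
        obtain ⟨v₁, hsv₁, hvv₁⟩ := steps_app_inv hsu₁ hvu₁ _ _ rfl
        obtain ⟨v₂, hsv₂, hvv₂⟩ := steps_app_inv hsu₂ hvu₂ _ _ rfl
        refine ⟨v₁, v₂, hsv₁, hsv₂, hvv₁, hvv₂, ?_⟩
        intro w₁' w₂' hw'
        obtain ⟨hty₁, hty₂, u₁', u₂', hsu₁', hsu₂', hvu₁', hvu₂', hu'⟩ := h w₁' w₂' hw'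
        refine ⟨preservation_steps (steps_appL hsv₁) hty₁,
          preservation_steps (steps_appL hsv₂) hty₂, u₁', u₂',
          steps_confl (steps_appL hsv₁) hsu₁' hvu₁',
          steps_confl (steps_appL hsv₂) hsu₂' hvu₂', hvu₁', hvu₂', hu'⟩

lemma vrel_irrel {δ₁ δ₂ δ₁' δ₂' : ℕ → Ty} {ρ ρ' : TyEnv} : ∀ τ : Ty, τ.closed →
    ∀ e₁ e₂, Vrel δ₁ δ₂ ρ τ e₁ e₂ ↔ Vrel δ₁' δ₂' ρ' τ e₁ e₂ := by
  intro τ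
  induction τ with
  | int => intro _ e₁ e₂; exact Iff.rfl
  | tvar a => intro hc; exact absurd hc (by simp [Ty.closed, Ty.wf])
  | prod t₁ t₂ ih₁ ih₂ =>
      intro hc e₁ e₂
      constructor
      · rintro ⟨a₁, b₁, a₂, b₂, rfl, rfl, ha, hb⟩
        exact ⟨a₁, b₁, a₂, b₂, rfl, rfl, (ih₁ hc.1 _ _).mp ha, (ih₂ hc.2 _ _).mp hb⟩
      · rintro ⟨a₁, b₁, a₂, b₂, rfl, rfl, ha, hb⟩
        exact ⟨a₁, b₁, a₂, b₂, rfl, rfl, (ih₁ hc.1 _ _).mpr ha, (ih₂ hc.2 _ _).mpr hb⟩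
  | arrow t₁ t₂ ih₁ ih₂ =>
      intro hc e₁ e₂
      have h1 : Ty.subst δ₁ t₂ = t₂ := Ty.subst_closed_id hc.2 δ₁
      have h2 : Ty.subst δ₂ t₂ = t₂ := Ty.subst_closed_id hc.2 δ₂
      have h1' : Ty.subst δ₁' t₂ = t₂ := Ty.subst_closed_id hc.2 δ₁'
      have h2' : Ty.subst δ₂' t₂ = t₂ := Ty.subst_closed_id hc.2 δ₂'
      constructor
      · intro h w₁ w₂ hw
        obtain ⟨hty₁, hty₂, u₁, u₂, hs₁, hs₂, hv₁, hv₂, hu⟩ := h w₁ w₂ ((ih₁ hc.1 _ _).mpr hw)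
        exact ⟨by rw [h1']; exact h1 ▸ hty₁, by rw [h2']; exact h2 ▸ hty₂,
          u₁, u₂, hs₁, hs₂, hv₁, hv₂, (ih₂ hc.2 _ _).mp hu⟩
      · intro h w₁ w₂ hw
        obtain ⟨hty₁, hty₂, u₁, u₂, hs₁, hs₂, hv₁, hv₂, hu⟩ := h w₁ w₂ ((ih₁ hc.1 _ _).mp hw)
        exact ⟨by rw [h1]; exact h1' ▸ hty₁, by rw [h2]; exact h2' ▸ hty₂,
          u₁, u₂, hs₁, hs₂, hv₁, hv₂, (ih₂ hc.2 _ _).mpr hu⟩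

lemma fund_ty {Δ Γ e τ} (δ : ℕ → Ty) (ht : HasTy Δ Γ e τ) (hno : e.noTyVars)
    (γ : ℕ → Option Tm) (hγ : SubstOk (Ctx.tsubst δ Γ) γ) :
    HasTy ∅ Ctx.empty (e.msubst γ) (τ.subst δ) := by
  have h1 := hasTy_tsubst δ ht hno
  have h2 := msubst_hasTy h1 γ hγ.2
  have hctx : (fun y => if (γ y).isSome then none else Ctx.tsubst δ Γ y) = Ctx.empty := by
    funext y
    by_cases h : (γ y).isSome
    · simp [h, Ctx.empty]
    · have h' : ¬ (Ctx.tsubst δ Γ y).isSome := fun hh => h ((hγ.1 y).mpr hh)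
      simp only [h, if_false, Ctx.empty]
      exact Option.not_isSome_iff_eq_none.mp h'
  rw [hctx] at h2
  exact h2

lemma substOk_range {Γ : Ctx} {γ} (h : SubstOk Γ γ) :
    ∀ y u, γ y = some u → ∀ σ, Tm.msubst σ u = u := by
  intro y u hy σ
  have h1 : (Γ y).isSome := (h.1 y).mp (by simp [hy])
  obtain ⟨τ', hτ'⟩ := Option.isSome_iff_exists.mp h1
  have := (h.2 y τ' u hτ' hy).2
  exact msubst_closed this σ (fun z hz => by simp [Ctx.empty] at hz)

lemma substRel_update {δ₁ δ₂ ρ Γ γ₁ γ₂} {x : ℕ} {τ₁ : Ty} {w₁ w₂ : Tm}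
    (h : SubstRel δ₁ δ₂ ρ Γ γ₁ γ₂) (hw : Vrel δ₁ δ₂ ρ τ₁ w₁ w₂)
    (hv₁ : IsValue w₁) (hv₂ : IsValue w₂)
    (ht₁ : HasTy ∅ Ctx.empty w₁ (τ₁.subst δ₁)) (ht₂ : HasTy ∅ Ctx.empty w₂ (τ₁.subst δ₂)) :
    SubstRel δ₁ δ₂ ρ (Ctx.update Γ x τ₁)
      (fun y => if y = x then some w₁ else γ₁ y)
      (fun y => if y = x then some w₂ else γ₂ y) := by
  obtain ⟨h1, h2, h3⟩ := h
  have mk : ∀ (δ : ℕ → Ty) (γ : ℕ → Option Tm) (w : Tm), SubstOk (Ctx.tsubst δ Γ) γ →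
      IsValue w → HasTy ∅ Ctx.empty w (τ₁.subst δ) →
      SubstOk (Ctx.tsubst δ (Ctx.update Γ x τ₁)) (fun y => if y = x then some w else γ y) := by
    intro δ γ w hok hvw htw
    constructor
    · intro y
      by_cases hyx : y = x <;> simp [hyx, Ctx.tsubst, Ctx.update, hok.1 y]
    · intro y τ' v hy hv
      have hy' : Option.map (Ty.subst δ) (if y = x then some τ₁ else Γ y) = some τ' := hy
      have hv' : (if y = x then some w else γ y) = some v := hv
      by_cases hyx : y = x
      · rw [if_pos hyx] at hy' hv'
        cases hv'
        simp only [Option.map_some] at hy'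
        cases hy'
        exact ⟨hvw, htw⟩
      · rw [if_neg hyx] at hy' hv'
        exact hok.2 y τ' v hy' hv'
  refine ⟨mk δ₁ γ₁ w₁ h1 hv₁ ht₁, mk δ₂ γ₂ w₂ h2 hv₂ ht₂, ?_⟩
  intro y τ' hy
  have hy' : (if y = x then some τ₁ else Γ y) = some τ' := hy
  by_cases hyx : y = x
  · rw [if_pos hyx] at hy'
    cases hy'
    refine ⟨w₁, w₂, ?_, ?_, hw⟩
    · show (if y = x then some w₁ else γ₁ y) = some w₁; rw [if_pos hyx]
    · show (if y = x then some w₂ else γ₂ y) = some w₂; rw [if_pos hyx]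
  · rw [if_neg hyx] at hy'
    obtain ⟨v₁, v₂, hv₁', hv₂', hvv⟩ := h3 y τ' hy'
    refine ⟨v₁, v₂, ?_, ?_, hvv⟩
    · show (if y = x then some w₁ else γ₁ y) = some v₁; rw [if_neg hyx]; exact hv₁'
    · show (if y = x then some w₂ else γ₂ y) = some v₂; rw [if_neg hyx]; exact hv₂'

/-- The fundamental lemma (abstraction theorem) for terms without type variables. -/
lemma fund {Δ Γ e τ} (ht : HasTy Δ Γ e τ) (hno : e.noTyVars) :
    ∀ δ₁ δ₂ (ρ : TyEnv) γ₁ γ₂, SubstRel δ₁ δ₂ ρ Γ γ₁ γ₂ →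
      Erel δ₁ δ₂ ρ τ (e.msubst γ₁) (e.msubst γ₂) := by
  induction ht with
  | @var Γ' x τ' hx =>
      intro δ₁ δ₂ ρ γ₁ γ₂ hγ
      obtain ⟨hok₁, hok₂, hrel⟩ := hγ
      obtain ⟨v₁, v₂, h1, h2, hv⟩ := hrel x τ' hx
      have cv₁ := hok₁.2 x (τ'.subst δ₁) v₁ (by simp [Ctx.tsubst, hx]) h1
      have cv₂ := hok₂.2 x (τ'.subst δ₂) v₂ (by simp [Ctx.tsubst, hx]) h2
      have e1 : Tm.msubst γ₁ (.var x) = v₁ := by show (γ₁ x).getD _ = _; simp [h1]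
      have e2 : Tm.msubst γ₂ (.var x) = v₂ := by show (γ₂ x).getD _ = _; simp [h2]
      rw [e1, e2]
      exact ⟨cv₁.2, cv₂.2, v₁, v₂, .refl, .refl, cv₁.1, cv₂.1, hv⟩
  | @lit Γ' n =>
      intro δ₁ δ₂ ρ γ₁ γ₂ hγ
      exact ⟨.lit n, .lit n, .lit n, .lit n, .refl, .refl, .lit n, .lit n, n, rfl, rfl⟩
  | @pair Γ' e₁ e₂ τ₁ τ₂ ht₁ ht₂ ih₁ ih₂ =>
      intro δ₁ δ₂ ρ γ₁ γ₂ hγ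
      obtain ⟨T₁, T₁', v₁, v₁', s₁, s₁', hv₁, hv₁', hV₁⟩ := ih₁ hno.1 δ₁ δ₂ ρ γ₁ γ₂ hγ
      obtain ⟨T₂, T₂', v₂, v₂', s₂, s₂', hv₂, hv₂', hV₂⟩ := ih₂ hno.2 δ₁ δ₂ ρ γ₁ γ₂ hγ
      refine ⟨.pair T₁ T₂, .pair T₁' T₂', .pair v₁ v₂, .pair v₁' v₂', ?_, ?_,
        .pair hv₁ hv₂, .pair hv₁' hv₂', v₁, v₂, v₁', v₂', rfl, rfl, hV₁, hV₂⟩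
      · exact .trans (steps_pairL s₁) (steps_pairR hv₁ s₂)
      · exact .trans (steps_pairL s₁') (steps_pairR hv₁' s₂')
  | @fst Γ' e' τ₁ τ₂ ht' ih =>
      intro δ₁ δ₂ ρ γ₁ γ₂ hγ
      obtain ⟨T, T', v, v', s, s', hv, hv', hV⟩ := ih hno δ₁ δ₂ ρ γ₁ γ₂ hγ
      obtain ⟨a₁, b₁, a₂, b₂, rfl, rfl, ha, hb⟩ := hV
      cases hv with
      | pair hva hvb =>
          cases hv' with
          | pair hva' hvb' =>
              exact ⟨.fst T, .fst T', a₁, a₂,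
                .tail (steps_fst s) (.fstPair hva hvb),
                .tail (steps_fst s') (.fstPair hva' hvb'), hva, hva', ha⟩
  | @snd Γ' e' τ₁ τ₂ ht' ih =>
      intro δ₁ δ₂ ρ γ₁ γ₂ hγ
      obtain ⟨T, T', v, v', s, s', hv, hv', hV⟩ := ih hno δ₁ δ₂ ρ γ₁ γ₂ hγ
      obtain ⟨a₁, b₁, a₂, b₂, rfl, rfl, ha, hb⟩ := hV
      cases hv with
      | pair hva hvb =>
          cases hv' with
          | pair hva' hvb' =>
              exact ⟨.snd T, .snd T', b₁, b₂,
                .tail (steps_snd s) (.sndPair hva hvb),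
                .tail (steps_snd s') (.sndPair hva' hvb'), hvb, hvb', hb⟩
  | @lam Γ' x τ₁ b τ₂ hwf htb ih =>
      intro δ₁ δ₂ ρ γ₁ γ₂ hγ
      have hc₁ : Ty.closed τ₁ := hno.1
      have hτ₁s₁ : Ty.subst δ₁ τ₁ = τ₁ := Ty.subst_closed_id hc₁ δ₁
      have hτ₁s₂ : Ty.subst δ₂ τ₁ = τ₁ := Ty.subst_closed_id hc₁ δ₂
      have T₁ := fund_ty δ₁ (HasTy.lam hwf htb) hno γ₁ hγ.1
      have T₂ := fund_ty δ₂ (HasTy.lam hwf htb) hno γ₂ hγ.2.1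
      obtain ⟨A₁, B₁, C₁⟩ := vrel_closed (δ₁ := δ₁) (δ₂ := δ₂) (ρ := ρ) τ₁ hc₁
      refine ⟨T₁, T₂, _, _, .refl, .refl, .lam _ _ _, .lam _ _ _, ?_⟩
      intro w₁ w₂ hw
      have htw₁ : HasTy ∅ Ctx.empty w₁ (Ty.subst δ₁ τ₁) := by rw [hτ₁s₁]; exact (A₁ _ _ hw).1
      have htw₂ : HasTy ∅ Ctx.empty w₂ (Ty.subst δ₂ τ₁) := by rw [hτ₁s₂]; exact (A₁ _ _ hw).2
      constructor
      · exact .app T₁ htw₁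
      constructor
      · exact .app T₂ htw₂
      obtain ⟨w₁', w₂', sw₁, sw₂, hvw₁, hvw₂, hw'⟩ := C₁ _ _ hw
      have htw₁' : HasTy ∅ Ctx.empty w₁' (Ty.subst δ₁ τ₁) := by
        rw [hτ₁s₁]; exact (A₁ _ _ hw').1
      have htw₂' : HasTy ∅ Ctx.empty w₂' (Ty.subst δ₂ τ₁) := by
        rw [hτ₁s₂]; exact (A₁ _ _ hw').2
      have hext := substRel_update (x := x) hγ hw' hvw₁ hvw₂ htw₁' htw₂'
      obtain ⟨_, _, u₁, u₂, su₁, su₂, hvu₁, hvu₂, hU⟩ := ih hno.2 δ₁ δ₂ ρ _ _ hext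
      refine ⟨u₁, u₂, ?_, ?_, hvu₁, hvu₂, hU⟩
      · have hbeta : Step
            (Tm.app (Tm.lam x τ₁ (Tm.msubst (fun y => if y = x then none else γ₁ y) b)) w₁')
            (Tm.subst1 x w₁' (Tm.msubst (fun y => if y = x then none else γ₁ y) b)) :=
          Step.beta hvw₁
        rw [subst1_msubst b x w₁' γ₁ (substOk_range hγ.1)] at hbeta
        exact .trans (steps_appR (.lam _ _ _) sw₁) (.head hbeta su₁)
      · have hbeta : Step
            (Tm.app (Tm.lam x τ₁ (Tm.msubst (fun y => if y = x then none else γ₂ y) b)) w₂')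
            (Tm.subst1 x w₂' (Tm.msubst (fun y => if y = x then none else γ₂ y) b)) :=
          Step.beta hvw₂
        rw [subst1_msubst b x w₂' γ₂ (substOk_range hγ.2.1)] at hbeta
        exact .trans (steps_appR (.lam _ _ _) sw₂) (.head hbeta su₂)
  | @app Γ' e₁ e₂ τ₁ τ₂ ht₁ ht₂ ih₁ ih₂ =>
      intro δ₁ δ₂ ρ γ₁ γ₂ hγ
      obtain ⟨T₁, T₁', v₁, v₁', s₁, s₁', hv₁, hv₁', hV₁⟩ := ih₁ hno.1 δ₁ δ₂ ρ γ₁ γ₂ hγ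
      obtain ⟨T₂, T₂', w₁, w₂, s₂, s₂', hw₁, hw₂, hV₂⟩ := ih₂ hno.2 δ₁ δ₂ ρ γ₁ γ₂ hγ
      obtain ⟨_, _, u₁, u₂, su₁, su₂, hvu₁, hvu₂, hU⟩ := hV₁ w₁ w₂ hV₂
      refine ⟨.app T₁ T₂, .app T₁' T₂', u₁, u₂, ?_, ?_, hvu₁, hvu₂, hU⟩
      · exact .trans (steps_appL s₁) (.trans (steps_appR hv₁ s₂) su₁)
      · exact .trans (steps_appL s₁') (.trans (steps_appR hv₁' s₂') su₂)
  | @prim Γ' g e₁ e₂ ht₁ ht₂ ih₁ ih₂ =>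
      intro δ₁ δ₂ ρ γ₁ γ₂ hγ
      obtain ⟨T₁, T₁', v₁, v₁', s₁, s₁', hv₁, hv₁', n₁, rfl, rfl⟩ := ih₁ hno.1 δ₁ δ₂ ρ γ₁ γ₂ hγ
      obtain ⟨T₂, T₂', v₂, v₂', s₂, s₂', hv₂, hv₂', n₂, rfl, rfl⟩ := ih₂ hno.2 δ₁ δ₂ ρ γ₁ γ₂ hγ
      refine ⟨.prim g T₁ T₂, .prim g T₁' T₂', .lit (g n₁ n₂), .lit (g n₁ n₂), ?_, ?_,
        .lit _, .lit _, g n₁ n₂, rfl, rfl⟩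
      · exact .tail (.trans (steps_primL s₁) (steps_primR (.lit n₁) s₂)) (.primOp g n₁ n₂)
      · exact .tail (.trans (steps_primL s₁') (steps_primR (.lit n₁) s₂')) (.primOp g n₁ n₂)

lemma indVal_iff_vrel (P : Policy) : ∀ τ : Ty, ∀ e₁ e₂,
    P.IndVal τ e₁ e₂ ↔ Vrel deltaP deltaP P.rho τ e₁ e₂ := by
  intro τ
  induction τ with
  | int => intro e₁ e₂; exact Iff.rfl
  | tvar a => intro e₁ e₂; exact Iff.rfl
  | prod t₁ t₂ ih₁ ih₂ =>
      intro e₁ e₂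
      constructor
      · rintro ⟨a₁, b₁, a₂, b₂, rfl, rfl, ha, hb⟩
        exact ⟨a₁, b₁, a₂, b₂, rfl, rfl, (ih₁ _ _).mp ha, (ih₂ _ _).mp hb⟩
      · rintro ⟨a₁, b₁, a₂, b₂, rfl, rfl, ha, hb⟩
        exact ⟨a₁, b₁, a₂, b₂, rfl, rfl, (ih₁ _ _).mpr ha, (ih₂ _ _).mpr hb⟩
  | arrow t₁ t₂ ih₁ ih₂ =>
      intro e₁ e₂
      constructor
      · intro h w₁ w₂ hw
        obtain ⟨h1, h2, u₁, u₂, s₁, s₂, hv₁, hv₂, hu⟩ := h w₁ w₂ ((ih₁ _ _).mpr hw)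
        exact ⟨h1, h2, u₁, u₂, s₁, s₂, hv₁, hv₂, (ih₂ _ _).mp hu⟩
      · intro h w₁ w₂ hw
        obtain ⟨h1, h2, u₁, u₂, s₁, s₂, hv₁, hv₂, hu⟩ := h w₁ w₂ ((ih₁ _ _).mp hw)
        exact ⟨h1, h2, u₁, u₂, s₁, s₂, hv₁, hv₂, (ih₂ _ _).mpr hu⟩

lemma tsubst_pubCtx (P : Policy) (hP : P.WF) :
    Ctx.tsubst deltaP P.pubCtx = P.confCtx := by
  funext n
  show (P.pubCtx n).map (Ty.subst deltaP) = P.confCtx n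
  unfold Policy.pubCtx Policy.confCtx
  by_cases hpar : n % 2 = 0
  · simp only [if_pos hpar]
    by_cases hmem : n / 2 ∈ P.vars <;> simp [hmem, Ty.subst, deltaP]
  · simp only [if_neg hpar]
    cases hdec : P.dec (n / 2) with
    | none => simp
    | some p =>
        obtain ⟨f, τf⟩ := p
        have hclosed := (hP.2 _ _ _ hdec).1
        simp [Ty.subst, deltaP, Ty.subst_closed_id hclosed]

lemma pubCtx_wf (P : Policy) (hP : P.WF) :
    ∀ n τ', P.pubCtx n = some τ' → Ty.wf P.tyCtx τ' := by
  intro n τ' h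
  unfold Policy.pubCtx at h
  by_cases hpar : n % 2 = 0
  · rw [if_pos hpar] at h
    by_cases hmem : n / 2 ∈ P.vars
    · rw [if_pos hmem] at h
      cases h
      exact hmem
    · rw [if_neg hmem] at h; cases h
  · rw [if_neg hpar] at h
    cases hdec : P.dec (n / 2) with
    | none => rw [hdec] at h; cases h
    | some p =>
        obtain ⟨f, τf⟩ := p
        rw [hdec] at h
        simp only [Option.map_some] at h
        cases h
        refine ⟨?_, (hP.2 _ _ _ hdec).1.mono (Set.empty_subset _)⟩
        exact hP.1 _ (by simp [hdec])

lemma indSubst_substRel (P : Policy) (hP : P.WF) {γ₁ γ₂}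
    (h : P.IndSubst γ₁ γ₂) :
    SubstRel deltaP deltaP P.rho P.pubCtx γ₁ γ₂ := by
  obtain ⟨h1, h2, hdec, hvars⟩ := h
  refine ⟨h1, h2, ?_⟩
  intro n τ' hn
  unfold Policy.pubCtx at hn
  by_cases hpar : n % 2 = 0
  · rw [if_pos hpar] at hn
    by_cases hmem : n / 2 ∈ P.vars
    · rw [if_pos hmem] at hn
      cases hn
      obtain ⟨v₁, v₂, hv₁, hv₂, hvv⟩ := hvars _ hmem
      have hne : 2 * (n / 2) = n := by omega
      rw [hne] at hv₁ hv₂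
      exact ⟨v₁, v₂, hv₁, hv₂, (indVal_iff_vrel P _ _ _).mp hvv⟩
    · rw [if_neg hmem] at hn; cases hn
  · rw [if_neg hpar] at hn
    cases hdec' : P.dec (n / 2) with
    | none => rw [hdec'] at hn; cases hn
    | some p =>
        obtain ⟨f, τf⟩ := p
        rw [hdec'] at hn
        simp only [Option.map_some] at hn
        cases hn
        obtain ⟨hf₁, hf₂⟩ := hdec _ _ _ hdec'
        have hne : 2 * (n / 2) + 1 = n := by omega
        rw [hne] at hf₁ hf₂
        refine ⟨f, f, hf₁, hf₂, ?_⟩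
        intro w₁ w₂ hw
        have hw' : P.rho (n / 2) w₁ w₂ := hw
        rw [Policy.rho, hdec'] at hw'
        obtain ⟨cv₁, cv₂, hE⟩ := hw'
        obtain ⟨hT₁, hT₂, u₁, u₂, s₁, s₂, hv₁, hv₂, hu⟩ := hE
        have hclosed := (hP.2 _ _ _ hdec').1
        exact ⟨hT₁, hT₂, u₁, u₂, s₁, s₂, hv₁, hv₂, (vrel_irrel τf hclosed _ _).mp hu⟩
theorem typing_in_public_view_implies_TRNI
    (P : Policy) (hP : P.WF) (e : Tm) (τ : Ty)
    (hno : e.noTyVars)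
    (ht : HasTy P.tyCtx P.pubCtx e τ) :
    P.TRNI τ e := by
  refine ⟨?_, ?_, ?_⟩
  · refine ⟨τ.subst deltaP, ?_⟩
    rw [← tsubst_pubCtx P hP]
    exact hasTy_tsubst deltaP ht hno
  · exact hasTy_regular ht (pubCtx_wf P hP)
  · intro γ₁ γ₂ hind
    have hrel := indSubst_substRel P hP hind
    obtain ⟨hT₁, hT₂, u₁, u₂, s₁, s₂, hv₁, hv₂, hu⟩ :=
      fund ht hno deltaP deltaP P.rho γ₁ γ₂ hrel
    exact ⟨hT₁, hT₂, u₁, u₂, s₁, s₂, hv₁, hv₂, (indVal_iff_vrel P τ _ _).mpr hu⟩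

end STLC
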